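/- Let R be a Γ-graded integral domain, ⋆ a homogeneous star operation on R, and ★ any classical star operation on R such that A^★ = A^⋆ for every nonzero homogeneous fractional ideal A. Then ★ ≤ e(⋆), i.e., A^★ ⊆ A^{e(⋆)} for every nonzero fractional ideal A of R. Thus e(⋆) is the largest extension of ⋆ to a classical star operation. -/

import Mathlib

open FractionalIdeal
open scoped Classical

section Setup

variable {Γ : Type*} [AddCommMonoid Γ] [LinearOrder Γ] [IsOrderedCancelAddMonoid Γ] [DecidableEq Γ]
  {R : Type*} [CommRing R] [IsDomain R]
  (𝒜 : Γ → AddSubgroup R) [GradedRing 𝒜]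
  (K : Type*) [Field K] [Algebra R K] [IsFractionRing R K]

/-- The integral ideal corresponding to a fractional ideal contained in `R`. -/
def idealOf (J : FractionalIdeal (nonZeroDivisors R) K) : Ideal R :=
  (J : Submodule R K).comap (Algebra.linearMap R K)

/-- An integral ideal is homogeneous if it contains all homogeneous components of its elements. -/
def IsHomIdeal (I : Ideal R) : Prop := ∀ f ∈ I, ∀ γ : Γ, GradedRing.proj 𝒜 γ f ∈ I

/-- `C(I)`: the homogeneous ideal generated by the homogeneous components of elements of `I`. -/
def homC (I : Ideal R) : Ideal R :=
  Ideal.span {x | ∃ f ∈ I, ∃ γ : Γ, x = GradedRing.proj 𝒜 γ f}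

/-- `C(J)` for a fractional ideal `J ⊆ R`, as a fractional ideal. -/
def Cfrac (J : FractionalIdeal (nonZeroDivisors R) K) : FractionalIdeal (nonZeroDivisors R) K :=
  ↑(homC 𝒜 (idealOf K J))

/-- A fractional ideal is homogeneous if some nonzero homogeneous `s ∈ R` multiplies it into a
homogeneous integral ideal. -/
def IsHomFrac (A : FractionalIdeal (nonZeroDivisors R) K) : Prop :=
  ∃ s : R, s ≠ 0 ∧ SetLike.IsHomogeneousElem 𝒜 s ∧
    spanSingleton (nonZeroDivisors R) (algebraMap R K s) * A ≤ 1 ∧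
    IsHomIdeal 𝒜 (idealOf K (spanSingleton (nonZeroDivisors R) (algebraMap R K s) * A))

/-- A homogeneous element of the homogeneous quotient field, viewed inside `K`. -/
def IsHomElem (x : K) : Prop :=
  ∃ a b : R, SetLike.IsHomogeneousElem 𝒜 a ∧ SetLike.IsHomogeneousElem 𝒜 b ∧ b ≠ 0 ∧
    x * algebraMap R K b = algebraMap R K a

end Setup

/-- A homogeneous star operation on the graded domain `R`. -/
structure HomStarOp {Γ : Type*} [AddCommMonoid Γ] [LinearOrder Γ] [IsOrderedCancelAddMonoid Γ] [DecidableEq Γ]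
    {R : Type*} [CommRing R] [IsDomain R] (𝒜 : Γ → AddSubgroup R) [GradedRing 𝒜]
    (K : Type*) [Field K] [Algebra R K] [IsFractionRing R K] where
  toFun : FractionalIdeal (nonZeroDivisors R) K → FractionalIdeal (nonZeroDivisors R) K
  hom : ∀ A, A ≠ 0 → IsHomFrac 𝒜 K A → IsHomFrac 𝒜 K (toFun A)
  map_span : ∀ x : K, x ≠ 0 → IsHomElem 𝒜 K x →
    toFun (spanSingleton (nonZeroDivisors R) x) = spanSingleton (nonZeroDivisors R) x
  map_smul : ∀ x : K, x ≠ 0 → IsHomElem 𝒜 K x → ∀ A, A ≠ 0 → IsHomFrac 𝒜 K A →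
    toFun (spanSingleton (nonZeroDivisors R) x * A) = spanSingleton (nonZeroDivisors R) x * toFun A
  le_star : ∀ A, A ≠ 0 → IsHomFrac 𝒜 K A → A ≤ toFun A
  mono : ∀ A B, A ≠ 0 → B ≠ 0 → IsHomFrac 𝒜 K A → IsHomFrac 𝒜 K B → A ≤ B → toFun A ≤ toFun B
  idem : ∀ A, A ≠ 0 → IsHomFrac 𝒜 K A → toFun (toFun A) = toFun A

/-- A classical star operation on the domain `R`. -/
structure StarOp (R : Type*) [CommRing R] [IsDomain R]
    (K : Type*) [Field K] [Algebra R K] [IsFractionRing R K] where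
  toFun : FractionalIdeal (nonZeroDivisors R) K → FractionalIdeal (nonZeroDivisors R) K
  map_span : ∀ x : K, x ≠ 0 →
    toFun (spanSingleton (nonZeroDivisors R) x) = spanSingleton (nonZeroDivisors R) x
  map_smul : ∀ x : K, x ≠ 0 → ∀ A, A ≠ 0 →
    toFun (spanSingleton (nonZeroDivisors R) x * A) = spanSingleton (nonZeroDivisors R) x * toFun A
  le_star : ∀ A, A ≠ 0 → A ≤ toFun A
  mono : ∀ A B, A ≠ 0 → B ≠ 0 → A ≤ B → toFun A ≤ toFun B
  idem : ∀ A, A ≠ 0 → toFun (toFun A) = toFun A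

section EStar

variable {Γ : Type*} [AddCommMonoid Γ] [LinearOrder Γ] [IsOrderedCancelAddMonoid Γ] [DecidableEq Γ]
  {R : Type*} [CommRing R] [IsDomain R]
  (𝒜 : Γ → AddSubgroup R) [GradedRing 𝒜]
  (K : Type*) [Field K] [Algebra R K] [IsFractionRing R K]

/-- The submodule `⋂ { z⁻¹ (C(zA))^⋆ : 0 ≠ z ∈ (R : A) }`. -/
def eStarSub (s : HomStarOp 𝒜 K) (A : FractionalIdeal (nonZeroDivisors R) K) : Submodule R K :=
  ⨅ z ∈ {z : K | z ≠ 0 ∧ spanSingleton (nonZeroDivisors R) z * A ≤ 1},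
    ↑(spanSingleton (nonZeroDivisors R) z⁻¹ *
      s.toFun (Cfrac 𝒜 K (spanSingleton (nonZeroDivisors R) z * A)))

/-- The extension `e(⋆)` of a homogeneous star operation `⋆`,
`A^{e(⋆)} := ⋂ { z⁻¹ (C(zA))^⋆ : 0 ≠ z ∈ (R : A) }` (which is a fractional ideal whenever
`A` is a nonzero fractional ideal). -/
noncomputable def eStar (s : HomStarOp 𝒜 K) (A : FractionalIdeal (nonZeroDivisors R) K) :
    FractionalIdeal (nonZeroDivisors R) K :=
  if h : IsFractional (nonZeroDivisors R) (eStarSub 𝒜 K s A) then ⟨_, h⟩ else 0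

end EStar


section AuxLemmas

set_option linter.unusedSectionVars false

variable {Γ : Type*} [AddCommMonoid Γ] [LinearOrder Γ] [IsOrderedCancelAddMonoid Γ] [DecidableEq Γ]
  {R : Type*} [CommRing R] [IsDomain R]
  (𝒜 : Γ → AddSubgroup R) [GradedRing 𝒜]
  (K : Type*) [Field K] [Algebra R K] [IsFractionRing R K]

lemma mem_idealOf' {J : FractionalIdeal (nonZeroDivisors R) K} {r : R} :
    r ∈ idealOf K J ↔ algebraMap R K r ∈ J := Iff.rfl

lemma le_Cfrac' {J : FractionalIdeal (nonZeroDivisors R) K} (hJ : J ≤ 1) : J ≤ Cfrac 𝒜 K J := by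
  intro x hx
  obtain ⟨r, hr⟩ := (FractionalIdeal.mem_one_iff _).mp (hJ hx)
  refine (FractionalIdeal.mem_coeIdeal _).mpr ⟨r, ?_, hr⟩
  have hrI : r ∈ idealOf K J := (mem_idealOf' K).mpr (hr ▸ hx)
  rw [← DirectSum.sum_support_decompose 𝒜 r]
  exact Ideal.sum_mem _ fun γ _ =>
    Ideal.subset_span ⟨r, hrI, γ, (GradedRing.proj_apply 𝒜 γ r).symm⟩

lemma idealOf_coeIdeal' (I : Ideal R) :
    idealOf K (I : FractionalIdeal (nonZeroDivisors R) K) = I := by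
  ext r
  rw [mem_idealOf', FractionalIdeal.mem_coeIdeal]
  constructor
  · rintro ⟨y, hy, h⟩
    rwa [IsFractionRing.injective R K h] at hy
  · exact fun h => ⟨r, h, rfl⟩

lemma isHomIdeal_homC' (I : Ideal R) : IsHomIdeal 𝒜 (homC 𝒜 I) := by
  have h : Ideal.IsHomogeneous 𝒜 (homC 𝒜 I) := by
    refine Ideal.homogeneous_span 𝒜 _ fun x hx => ?_
    obtain ⟨f, hf, γ, rfl⟩ := hx
    exact ⟨γ, by rw [GradedRing.proj_apply]; exact SetLike.coe_mem _⟩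
  intro f hf γ
  rw [GradedRing.proj_apply]
  exact h γ hf

lemma isHomFrac_Cfrac' (J : FractionalIdeal (nonZeroDivisors R) K) :
    IsHomFrac 𝒜 K (Cfrac 𝒜 K J) := by
  have he : spanSingleton (nonZeroDivisors R) (algebraMap R K 1) * Cfrac 𝒜 K J
      = Cfrac 𝒜 K J := by
    rw [_root_.map_one, spanSingleton_one, one_mul]
  refine ⟨1, one_ne_zero, SetLike.isHomogeneousElem_one 𝒜, ?_, ?_⟩
  · rw [he]; exact coeIdeal_le_one
  · rw [he, Cfrac, idealOf_coeIdeal']; exact isHomIdeal_homC' 𝒜 _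

lemma key_le' (s : HomStarOp 𝒜 K) (t : StarOp R K)
    (hext : ∀ A : FractionalIdeal (nonZeroDivisors R) K, A ≠ 0 → IsHomFrac 𝒜 K A →
      t.toFun A = s.toFun A)
    (A : FractionalIdeal (nonZeroDivisors R) K) (hA : A ≠ 0)
    (z : K) (hz : z ≠ 0) (hz1 : spanSingleton (nonZeroDivisors R) z * A ≤ 1) :
    t.toFun A ≤ spanSingleton (nonZeroDivisors R) z⁻¹ *
      s.toFun (Cfrac 𝒜 K (spanSingleton (nonZeroDivisors R) z * A)) := by
  set J := spanSingleton (nonZeroDivisors R) z * A with hJ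
  have hzz : spanSingleton (nonZeroDivisors R) z⁻¹ * spanSingleton (nonZeroDivisors R) z = 1 := by
    rw [spanSingleton_mul_spanSingleton, inv_mul_cancel₀ hz, spanSingleton_one]
  have hAJ : A = spanSingleton (nonZeroDivisors R) z⁻¹ * J := by
    rw [hJ, ← mul_assoc, hzz, one_mul]
  have hJ0 : J ≠ 0 := by
    intro h
    apply hA
    rw [hAJ, h, mul_zero]
  have hCle := le_Cfrac' 𝒜 K hz1
  have hC0 : Cfrac 𝒜 K J ≠ 0 := fun h => hJ0 (_root_.le_zero_iff.mp (h ▸ hCle))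
  have h1 : t.toFun J ≤ s.toFun (Cfrac 𝒜 K J) := by
    rw [← hext _ hC0 (isHomFrac_Cfrac' 𝒜 K J)]
    exact t.mono _ _ hJ0 hC0 hCle
  have h2 : t.toFun J = spanSingleton (nonZeroDivisors R) z * t.toFun A :=
    t.map_smul z hz A hA
  have h3 : t.toFun A = spanSingleton (nonZeroDivisors R) z⁻¹ * t.toFun J := by
    rw [h2, ← mul_assoc, hzz, one_mul]
  rw [h3]
  exact mul_right_mono h1

end AuxLemmas

/-- any classical star operation extending `⋆` is `≤ e(⋆)`. -/
theorem stmt_3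
    {Γ : Type*} [AddCommMonoid Γ] [LinearOrder Γ] [IsOrderedCancelAddMonoid Γ] [DecidableEq Γ]
    {R : Type*} [CommRing R] [IsDomain R]
    (𝒜 : Γ → AddSubgroup R) [GradedRing 𝒜]
    (K : Type*) [Field K] [Algebra R K] [IsFractionRing R K]
    (s : HomStarOp 𝒜 K) (t : StarOp R K)
    (hext : ∀ A : FractionalIdeal (nonZeroDivisors R) K, A ≠ 0 → IsHomFrac 𝒜 K A →
      t.toFun A = s.toFun A) :
    ∀ A : FractionalIdeal (nonZeroDivisors R) K, A ≠ 0 → t.toFun A ≤ eStar 𝒜 K s A := by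
  intro A hA
  have key : ∀ z ∈ {z : K | z ≠ 0 ∧ spanSingleton (nonZeroDivisors R) z * A ≤ 1},
      (t.toFun A : Submodule R K) ≤
        ↑(spanSingleton (nonZeroDivisors R) z⁻¹ *
          s.toFun (Cfrac 𝒜 K (spanSingleton (nonZeroDivisors R) z * A))) := fun z hz =>
    FractionalIdeal.coe_le_coe.mpr (key_le' 𝒜 K s t hext A hA z hz.1 hz.2)
  have hden : ∃ z : K, z ≠ 0 ∧ spanSingleton (nonZeroDivisors R) z * A ≤ 1 := by
    obtain ⟨a, haS, h⟩ := A.isFractional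
    refine ⟨algebraMap R K a, IsFractionRing.to_map_ne_zero_of_mem_nonZeroDivisors haS, ?_⟩
    refine FractionalIdeal.mul_le.mpr fun i hi j hj => ?_
    obtain ⟨d, hd⟩ := (FractionalIdeal.mem_spanSingleton _).mp hi
    obtain ⟨r, hr⟩ := h j hj
    rw [← hd, smul_mul_assoc]
    refine Submodule.smul_mem ((1 : FractionalIdeal (nonZeroDivisors R) K) : Submodule R K) d ?_
    exact (FractionalIdeal.mem_one_iff _).mpr ⟨r, by rwa [Algebra.smul_def] at hr⟩
  have hfrac : IsFractional (nonZeroDivisors R) (eStarSub 𝒜 K s A) := by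
    obtain ⟨z, hz0, hz1⟩ := hden
    have hle : eStarSub 𝒜 K s A ≤
        ↑(spanSingleton (nonZeroDivisors R) z⁻¹ *
          s.toFun (Cfrac 𝒜 K (spanSingleton (nonZeroDivisors R) z * A))) :=
      iInf₂_le z ⟨hz0, hz1⟩
    exact isFractional_of_le hle
  have he : eStar 𝒜 K s A = ⟨eStarSub 𝒜 K s A, hfrac⟩ := by
    unfold eStar; exact dif_pos hfrac
  rw [he]
  exact FractionalIdeal.coe_le_coe.mp (le_iInf₂ key)
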